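/- Define P_0(z) = 1 and P_n(z) = z S_{n-1}(z) - ρ_{n-1} S_{n-1}^*(z) for n ≥ 1. Then P_n(z) = (S_n(z) - ρ_n S_n^*(z))/(1 + ρ_n α_{n-1}) for all n ≥ 0, and for all n ≥ 1 the monic three term recurrence P_{n+1}(z) = (z + ρ_n/ρ_{n-1}) P_n(z) - (1 - conj(ρ_{n-1} α_{n-1}))·(1 + ρ_{n-1} α_{n-2})·z·P_{n-1}(z) holds. -/

import Mathlib

open Polynomial MeasureTheory Finset
open scoped ComplexConjugate

/-- A measure on `ℂ` is supported on the unit circle. -/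
def IsMeasureOnCircle (μ : MeasureTheory.Measure ℂ) : Prop :=
  μ {z : ℂ | ‖z‖ ≠ 1} = 0

/-- A measure is nontrivial: its support is infinite, i.e. it is not carried
by any finite set. -/
def IsNontrivialMeasure (μ : MeasureTheory.Measure ℂ) : Prop :=
  ∀ s : Finset ℂ, μ (↑s : Set ℂ)ᶜ ≠ 0

/-- `S` is the sequence of monic orthogonal polynomials (OPUC) of the measure `μ`:
`S_n` is monic of degree `n` and `∫ conj(S_m(ζ)) S_n(ζ) dμ(ζ) = 0` for `m ≠ n`. -/
def IsMonicOPUC (μ : MeasureTheory.Measure ℂ) (S : ℕ → Polynomial ℂ) : Prop :=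
  (∀ n, (S n).Monic ∧ (S n).natDegree = n) ∧
  ∀ m n, m ≠ n → ∫ z : ℂ, conj ((S m).eval z) * ((S n).eval z) ∂μ = 0

/-- The reversed (conjugate reciprocal) polynomial `p^*(z) = z^n conj(p(1/conj z))`
of a polynomial `p` of degree `n`. -/
noncomputable def starPoly (p : Polynomial ℂ) : Polynomial ℂ :=
  (p.map (starRingEnd ℂ)).reverse

/-! ### Auxiliary lemmas -/

lemma s13_inv_eq_conj {z : ℂ} (hz : ‖z‖ = 1) : z⁻¹ = conj z := by
  have : conj z * z = 1 := by
    rw [mul_comm, Complex.mul_conj, Complex.normSq_eq_norm_sq, hz]; norm_num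
  exact (eq_inv_of_mul_eq_one_left this).symm

lemma s13_conj_mul_self {z : ℂ} (hz : ‖z‖ = 1) : conj z * z = 1 := by
  rw [mul_comm, Complex.mul_conj, Complex.normSq_eq_norm_sq, hz]; norm_num

lemma s13_starPoly_eval (p : Polynomial ℂ) {z : ℂ} (hz : ‖z‖ = 1) :
    (starPoly p).eval z = z ^ p.natDegree * conj (p.eval z) := by
  have hz0 : z ≠ 0 := by intro h; rw [h] at hz; simp at hz
  have hzi : z⁻¹ ≠ 0 := inv_ne_zero hz0
  have : Invertible (z⁻¹) := invertibleOfNonzero hzi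
  have key := Polynomial.eval₂_reverse_mul_pow (RingHom.id ℂ) (z⁻¹) (p.map (starRingEnd ℂ))
  have hinv : (⅟(z⁻¹) : ℂ) = z := by rw [invOf_eq_inv]; exact inv_inv z
  rw [hinv] at key
  have hdeg : (p.map (starRingEnd ℂ)).natDegree = p.natDegree :=
    natDegree_map_eq_of_injective (RingHom.injective _) p
  have heval : ∀ q : Polynomial ℂ, ∀ w : ℂ, eval₂ (RingHom.id ℂ) w q = q.eval w := by
    intro q w; rfl
  rw [heval, heval, hdeg] at key
  have h2 : (p.map (starRingEnd ℂ)).eval z⁻¹ = conj (p.eval z) := by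
    rw [s13_inv_eq_conj hz, eval_map]
    simpa using Polynomial.eval₂_hom (starRingEnd ℂ) (p := p) (x := z)
  have hzp : z ^ p.natDegree ≠ 0 := pow_ne_zero _ hz0
  have key2 : (starPoly p).eval z * z⁻¹ ^ p.natDegree = conj (p.eval z) := by
    rw [← h2]; exact key
  rw [inv_pow] at key2
  field_simp at key2
  rw [key2, mul_comm]

lemma s13_circle_infinite : Set.Infinite {z : ℂ | ‖z‖ = 1} := by
  have hmem : ∀ x ∈ Set.Icc (-1 : ℝ) 1,
      ((x : ℂ) + Complex.I * Real.sqrt (1 - x ^ 2)) ∈ {z : ℂ | ‖z‖ = 1} := by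
    intro x hx
    obtain ⟨h1, h2⟩ := hx
    have hnn : (0:ℝ) ≤ 1 - x ^ 2 := by nlinarith
    have hsq : ‖(x : ℂ) + Complex.I * Real.sqrt (1 - x ^ 2)‖ ^ 2 = 1 := by
      rw [Complex.sq_norm, Complex.normSq_apply]
      simp [Complex.add_re, Complex.add_im]
      nlinarith [Real.sq_sqrt hnn]
    have hnonneg := norm_nonneg ((x : ℂ) + Complex.I * Real.sqrt (1 - x ^ 2))
    have : (‖(x : ℂ) + Complex.I * Real.sqrt (1 - x ^ 2)‖ - 1) *
        (‖(x : ℂ) + Complex.I * Real.sqrt (1 - x ^ 2)‖ + 1) = 0 := by nlinarith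
    rcases mul_eq_zero.mp this with h | h
    · simpa [sub_eq_zero] using h
    · exfalso; nlinarith
  have hinj : Set.InjOn (fun x : ℝ => ((x : ℂ) + Complex.I * Real.sqrt (1 - x ^ 2)))
      (Set.Icc (-1 : ℝ) 1) := by
    intro a _ b _ hab
    have := congrArg Complex.re hab
    simpa using this
  have := ((Set.Icc_infinite (by norm_num : (-1:ℝ) < 1)).image hinj).mono
    (by intro z hz; obtain ⟨x, hx, rfl⟩ := hz; exact hmem x hx)
  exact this

/-- equality of polynomials from agreement on the unit circle -/
lemma s13_eq_of_circle (p q : Polynomial ℂ)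
    (h : ∀ z : ℂ, ‖z‖ = 1 → p.eval z = q.eval z) : p = q := by
  refine Polynomial.eq_of_infinite_eval_eq p q (s13_circle_infinite.mono ?_)
  intro z hz
  exact h z hz

noncomputable def s13ip (μ : Measure ℂ) (p q : Polynomial ℂ) : ℂ :=
  ∫ z : ℂ, conj (p.eval z) * q.eval z ∂μ

noncomputable def s13nsq (μ : Measure ℂ) (p : Polynomial ℂ) : ℝ :=
  ∫ z : ℂ, Complex.normSq (p.eval z) ∂μ

lemma s13_circle_ae {μ : Measure ℂ} (hcirc : IsMeasureOnCircle μ) :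
    ∀ᵐ z ∂μ, ‖z‖ = 1 := hcirc

lemma s13_eval_bound (p : Polynomial ℂ) {z : ℂ} (hz : ‖z‖ = 1) :
    ‖p.eval z‖ ≤ ∑ i ∈ range (p.natDegree + 1), ‖p.coeff i‖ := by
  rw [Polynomial.eval_eq_sum_range]
  refine le_trans (norm_sum_le _ _) (Finset.sum_le_sum fun i _ => ?_)
  rw [norm_mul, norm_pow, hz, one_pow, mul_one]

section
variable {μ : Measure ℂ} [IsFiniteMeasure μ] (hcirc : IsMeasureOnCircle μ)
include hcirc

lemma s13_integrable (p q : Polynomial ℂ) :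
    Integrable (fun z : ℂ => conj (p.eval z) * q.eval z) μ := by
  set B := (∑ i ∈ range (p.natDegree + 1), ‖p.coeff i‖) *
    (∑ i ∈ range (q.natDegree + 1), ‖q.coeff i‖) with hB
  refine Integrable.mono' (integrable_const B) ?_ ?_
  · exact Continuous.aestronglyMeasurable (by continuity)
  · filter_upwards [s13_circle_ae hcirc] with z hz
    rw [norm_mul]
    have h1 : ‖conj (p.eval z)‖ = ‖p.eval z‖ := by
      simp
    rw [h1]
    exact mul_le_mul (s13_eval_bound p hz) (s13_eval_bound q hz)
      (norm_nonneg _) (le_trans (norm_nonneg _) (s13_eval_bound p hz))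

lemma s13ip_add_right (p q r : Polynomial ℂ) :
    s13ip μ p (q + r) = s13ip μ p q + s13ip μ p r := by
  unfold s13ip
  rw [← integral_add (s13_integrable hcirc p q) (s13_integrable hcirc p r)]
  congr 1; ext z; simp [mul_add]

lemma s13ip_add_left (p q r : Polynomial ℂ) :
    s13ip μ (p + q) r = s13ip μ p r + s13ip μ q r := by
  unfold s13ip
  rw [← integral_add (s13_integrable hcirc p r) (s13_integrable hcirc q r)]
  congr 1; ext z; simp [mul_add, add_mul]

omit hcirc in
lemma s13ip_Cmul_right (c : ℂ) (p q : Polynomial ℂ) :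
    s13ip μ p (C c * q) = c * s13ip μ p q := by
  unfold s13ip
  simp only [← smul_eq_mul (α := ℂ), ← integral_smul]
  congr 1; ext z; simp [smul_eq_mul]; ring

omit hcirc in
lemma s13ip_Cmul_left (c : ℂ) (p q : Polynomial ℂ) :
    s13ip μ (C c * p) q = conj c * s13ip μ p q := by
  unfold s13ip
  simp only [← smul_eq_mul (α := ℂ), ← integral_smul]
  congr 1; ext z; simp [smul_eq_mul]; ring

omit [IsFiniteMeasure μ] hcirc in
lemma s13ip_swap (p q : Polynomial ℂ) : s13ip μ q p = conj (s13ip μ p q) := by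
  unfold s13ip
  rw [← integral_conj]
  congr 1; ext z; simp [mul_comm]

lemma s13ip_sub_right (p q r : Polynomial ℂ) :
    s13ip μ p (q - r) = s13ip μ p q - s13ip μ p r := by
  have := s13ip_add_right hcirc p (q - r) r
  rw [sub_add_cancel] at this
  exact eq_sub_of_add_eq this.symm

lemma s13ip_sub_left (p q r : Polynomial ℂ) :
    s13ip μ (p - q) r = s13ip μ p r - s13ip μ q r := by
  have := s13ip_add_left hcirc (p - q) q r
  rw [sub_add_cancel] at this
  exact eq_sub_of_add_eq this.symm

omit [IsFiniteMeasure μ] hcirc in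
lemma s13ip_zero_left (q : Polynomial ℂ) : s13ip μ 0 q = 0 := by
  unfold s13ip; simp

lemma s13ip_sum_left {ι : Type*} (s : Finset ι) (f : ι → Polynomial ℂ) (q : Polynomial ℂ) :
    s13ip μ (∑ i ∈ s, f i) q = ∑ i ∈ s, s13ip μ (f i) q := by
  classical
  induction s using Finset.induction_on with
  | empty => simp [s13ip_zero_left]
  | insert _ _ h ih =>
      rw [Finset.sum_insert h, Finset.sum_insert h, s13ip_add_left hcirc, ih]

lemma s13ip_sum_right {ι : Type*} (s : Finset ι) (f : ι → Polynomial ℂ) (q : Polynomial ℂ) :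
    s13ip μ q (∑ i ∈ s, f i) = ∑ i ∈ s, s13ip μ q (f i) := by
  classical
  induction s using Finset.induction_on with
  | empty => unfold s13ip; simp
  | insert _ _ h ih =>
      rw [Finset.sum_insert h, Finset.sum_insert h, s13ip_add_right hcirc, ih]

lemma s13ip_X_mul (p q : Polynomial ℂ) :
    s13ip μ (X * p) (X * q) = s13ip μ p q := by
  unfold s13ip
  refine integral_congr_ae ?_
  filter_upwards [s13_circle_ae hcirc] with z hz
  simp only [eval_mul, eval_X, map_mul]
  calc conj z * conj (p.eval z) * (z * q.eval z)
      = (conj z * z) * (conj (p.eval z) * q.eval z) := by ring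
    _ = conj (p.eval z) * q.eval z := by rw [s13_conj_mul_self hz, one_mul]

/-- pairing of a monomial with a star polynomial -/
lemma s13ip_Xpow_star (p : Polynomial ℂ) {j : ℕ} (hj : j ≤ p.natDegree) :
    s13ip μ (X ^ j) (starPoly p) = conj (s13ip μ (X ^ (p.natDegree - j)) p) := by
  unfold s13ip
  rw [← integral_conj]
  refine integral_congr_ae ?_
  filter_upwards [s13_circle_ae hcirc] with z hz
  rw [s13_starPoly_eval p hz]
  simp only [eval_pow, eval_X, map_mul, map_pow, Complex.conj_conj]
  have hsplit : z ^ p.natDegree = z ^ (p.natDegree - j) * z ^ j := by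
    rw [← pow_add]; congr 1; omega
  rw [hsplit]
  calc conj z ^ j * (z ^ (p.natDegree - j) * z ^ j * conj (p.eval z))
      = (conj z * z) ^ j * (z ^ (p.natDegree - j) * conj (p.eval z)) := by ring
    _ = z ^ (p.natDegree - j) * conj (p.eval z) := by
        rw [s13_conj_mul_self hz, one_pow, one_mul]

lemma s13_integrable_nsq (p : Polynomial ℂ) :
    Integrable (fun z : ℂ => Complex.normSq (p.eval z)) μ := by
  have h := (s13_integrable hcirc p p).norm
  have heq : (fun z : ℂ => ‖conj (p.eval z) * p.eval z‖) =
      fun z : ℂ => Complex.normSq (p.eval z) := by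
    funext z
    rw [mul_comm, Complex.mul_conj, Complex.norm_real, Real.norm_eq_abs,
      abs_of_nonneg (Complex.normSq_nonneg _)]
  rwa [heq] at h

omit [IsFiniteMeasure μ] hcirc in
lemma s13ip_self (p : Polynomial ℂ) : s13ip μ p p = (s13nsq μ p : ℂ) := by
  unfold s13ip s13nsq
  rw [show (fun z : ℂ => conj (p.eval z) * p.eval z) =
    fun z : ℂ => ((Complex.normSq (p.eval z) : ℝ) : ℂ) from funext fun z => by
      rw [mul_comm, Complex.mul_conj]]
  exact integral_ofReal

lemma s13nsq_pos (hnt : IsNontrivialMeasure μ) (p : Polynomial ℂ) (hp : p ≠ 0) :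
    0 < s13nsq μ p := by
  rw [s13nsq]
  rw [integral_pos_iff_support_of_nonneg (fun z => Complex.normSq_nonneg _)
    (s13_integrable_nsq hcirc p)]
  have hsub : ((↑(p.roots.toFinset) : Set ℂ))ᶜ ⊆ Function.support
      (fun z : ℂ => Complex.normSq (p.eval z)) := by
    intro z hz
    simp only [Set.mem_compl_iff, Finset.mem_coe, Multiset.mem_toFinset] at hz
    have hne : p.eval z ≠ 0 := fun h => hz ((Polynomial.mem_roots hp).mpr h)
    simp [Function.mem_support, Complex.normSq_eq_zero, hne]
  exact lt_of_lt_of_le (pos_iff_ne_zero.mpr (hnt p.roots.toFinset)) (measure_mono hsub)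

lemma s13ip_self_zero (hnt : IsNontrivialMeasure μ) (p : Polynomial ℂ)
    (h : s13ip μ p p = 0) : p = 0 := by
  by_contra hp
  have hpos := s13nsq_pos hcirc hnt p hp
  rw [s13ip_self] at h
  rw [show s13nsq μ p = 0 by exact_mod_cast h] at hpos
  exact lt_irrefl 0 hpos


lemma s13ip_star_self (p : Polynomial ℂ) :
    s13ip μ (starPoly p) (starPoly p) = s13ip μ p p := by
  unfold s13ip
  refine integral_congr_ae ?_
  filter_upwards [s13_circle_ae hcirc] with z hz
  rw [s13_starPoly_eval p hz]
  simp only [map_mul, map_pow, Complex.conj_conj]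
  calc conj z ^ p.natDegree * p.eval z * (z ^ p.natDegree * conj (p.eval z))
      = (conj z * z) ^ p.natDegree * (conj (p.eval z) * p.eval z) := by ring
    _ = conj (p.eval z) * p.eval z := by rw [s13_conj_mul_self hz, one_pow, one_mul]

end

section
variable {μ : Measure ℂ} [IsFiniteMeasure μ] (hcirc : IsMeasureOnCircle μ)
  (hnt : IsNontrivialMeasure μ)
  {S : ℕ → Polynomial ℂ} (hSm : ∀ n, (S n).Monic ∧ (S n).natDegree = n)
  (horth : ∀ m n, m ≠ n → s13ip μ (S m) (S n) = 0)





















include hcirc hnt hSm horth in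
lemma s13_orth_lowdeg : ∀ k : ℕ, ∀ n : ℕ, k ≤ n → ∀ p : Polynomial ℂ,
    p.degree < (k : ℕ) → s13ip μ p (S n) = 0 := by
  intro k
  induction k with
  | zero =>
      intro n _ p hp
      have hp0 : p = 0 := by
        rw [Nat.cast_zero] at hp
        exact Polynomial.degree_eq_bot.mp (Nat.WithBot.lt_zero_iff.mp hp)
      rw [hp0]; exact s13ip_zero_left _
  | succ k ih =>
      intro n hkn p hp
      by_cases h0 : p = 0
      · rw [h0]; exact s13ip_zero_left _
      by_cases hlt : p.degree < (k : ℕ)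
      · exact ih n (le_trans (Nat.le_succ k) hkn) p hlt
      have hdeg : p.natDegree ≤ k := by
        have := (Polynomial.natDegree_lt_iff_degree_lt h0).mpr hp
        omega
      set d := p.natDegree with hd
      set c := p.leadingCoeff with hc
      have hc0 : c ≠ 0 := Polynomial.leadingCoeff_ne_zero.mpr h0
      have hSd0 : S d ≠ 0 := (hSm d).1.ne_zero
      have hdegS : (S d).degree = (d : ℕ) := by
        rw [Polynomial.degree_eq_natDegree hSd0, (hSm d).2]
      set q := p - C c * S d with hq
      have hdn : d ≠ n := by omega
      have hdeg_eq : p.degree = (C c * S d).degree := by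
        rw [Polynomial.degree_C_mul hc0, hdegS, Polynomial.degree_eq_natDegree h0]
      have hlc : p.leadingCoeff = (C c * S d).leadingCoeff := by
        rw [Polynomial.leadingCoeff_mul, Polynomial.leadingCoeff_C, (hSm d).1.leadingCoeff,
          mul_one]
      have hqdeg : q.degree < (k : ℕ) := by
        refine lt_of_lt_of_le (Polynomial.degree_sub_lt hdeg_eq h0 hlc) ?_
        rw [Polynomial.degree_eq_natDegree h0]
        exact_mod_cast hdeg
      have hsplit : p = q + C c * S d := by rw [hq]; ring
      rw [hsplit, s13ip_add_left hcirc, s13ip_Cmul_left,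
        ih n (le_trans (Nat.le_succ k) hkn) q hqdeg, horth d n hdn, zero_add, mul_zero]

include hcirc hnt hSm horth in
lemma s13ip_expand_left (p q : Polynomial ℂ) :
    s13ip μ p q = ∑ i ∈ range (p.natDegree + 1), conj (p.coeff i) * s13ip μ (X ^ i) q := by
  conv_lhs => rw [Polynomial.as_sum_range_C_mul_X_pow p]
  rw [s13ip_sum_left hcirc]
  exact Finset.sum_congr rfl fun i _ => s13ip_Cmul_left _ _ _

include hcirc hnt hSm horth in
lemma s13ip_Xpow_S {j n : ℕ} (h : j < n) : s13ip μ (X ^ j) (S n) = 0 := by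
  refine s13_orth_lowdeg hcirc hnt hSm horth n n le_rfl _ ?_
  rw [Polynomial.degree_X_pow]
  exact_mod_cast h

include hcirc hnt hSm horth in
lemma s13_szego (m : ℕ) :
    S (m + 1) = X * S m + C ((S (m + 1)).eval 0) * starPoly (S m) := by
  set e := (S (m + 1)).eval 0 with he
  set r := S (m + 1) - X * S m - C e * starPoly (S m) with hr
  have hSmne : ∀ k, S k ≠ 0 := fun k => (hSm k).1.ne_zero
  have hdeg_star : (starPoly (S m)).natDegree ≤ m := by
    refine le_trans (Polynomial.reverse_natDegree_le _) ?_
    rw [natDegree_map_eq_of_injective (RingHom.injective _), (hSm m).2]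
  have hXS_deg : (X * S m).degree = ((m + 1 : ℕ) : WithBot ℕ) := by
    rw [Polynomial.degree_mul, Polynomial.degree_X,
      Polynomial.degree_eq_natDegree (hSmne m), (hSm m).2]
    rw [show ((m + 1 : ℕ) : WithBot ℕ) = ((1 + m : ℕ) : WithBot ℕ) by rw [Nat.add_comm]]
    exact_mod_cast rfl
  have h1 : (S (m + 1) - X * S m).degree < ((m + 1 : ℕ) : WithBot ℕ) := by
    refine lt_of_lt_of_le (Polynomial.degree_sub_lt ?_ (hSmne (m + 1)) ?_) ?_
    · rw [hXS_deg, Polynomial.degree_eq_natDegree (hSmne (m + 1)), (hSm (m + 1)).2]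
    · rw [(hSm (m + 1)).1.leadingCoeff, (Polynomial.monic_X.mul (hSm m).1).leadingCoeff]
    · rw [Polynomial.degree_eq_natDegree (hSmne (m + 1)), (hSm (m + 1)).2]
  have h2a : (C e * starPoly (S m)).degree ≤ ((m : ℕ) : WithBot ℕ) := by
    refine le_trans Polynomial.degree_le_natDegree ?_
    have : (C e * starPoly (S m)).natDegree ≤ m :=
      le_trans Polynomial.natDegree_mul_le (by simp [hdeg_star])
    exact_mod_cast this
  have h2 : (C e * starPoly (S m)).degree < ((m + 1 : ℕ) : WithBot ℕ) :=
    lt_of_le_of_lt h2a (by exact_mod_cast Nat.lt_succ_self m)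
  have hr_deg : r.degree < ((m + 1 : ℕ) : WithBot ℕ) :=
    lt_of_le_of_lt (Polynomial.degree_sub_le _ _) (max_lt h1 h2)
  have hstar0 : (starPoly (S m)).coeff 0 = 1 := by
    rw [starPoly, Polynomial.coeff_zero_reverse]
    exact ((hSm m).1.map (starRingEnd ℂ)).leadingCoeff
  have hr0 : r.coeff 0 = 0 := by
    rw [hr, Polynomial.coeff_sub, Polynomial.coeff_sub, Polynomial.mul_coeff_zero,
      Polynomial.coeff_X_zero, Polynomial.coeff_C_mul, hstar0,
      Polynomial.coeff_zero_eq_eval_zero, ← he]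
    ring
  obtain ⟨t, ht⟩ : (X : Polynomial ℂ) ∣ r := Polynomial.X_dvd_iff.mpr hr0
  have horthr : ∀ j : ℕ, 1 ≤ j → j ≤ m → s13ip μ (X ^ j) r = 0 := by
    intro j hj1 hjm
    obtain ⟨i, rfl⟩ : ∃ i, j = i + 1 := ⟨j - 1, by omega⟩
    rw [hr, s13ip_sub_right hcirc, s13ip_sub_right hcirc, s13ip_Cmul_right]
    rw [s13ip_Xpow_S hcirc hnt hSm horth (by omega : i + 1 < m + 1)]
    rw [show (X : Polynomial ℂ) ^ (i + 1) = X * X ^ i from pow_succ' X i]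
    rw [s13ip_X_mul hcirc, s13ip_Xpow_S hcirc hnt hSm horth (by omega : i < m)]
    have := s13ip_Xpow_star hcirc (S m) (j := i + 1) (by rw [(hSm m).2]; omega)
    rw [show (X : Polynomial ℂ) * X ^ i = X ^ (i+1) from (pow_succ' X i).symm, this,
      (hSm m).2, s13ip_Xpow_S hcirc hnt hSm horth (by omega : m - (i + 1) < m)]
    simp
  have ht0 : t = 0 := by
    by_cases ht0 : t = 0
    · exact ht0
    have hrne : r ≠ 0 := by
      rw [ht]; exact mul_ne_zero Polynomial.X_ne_zero ht0
    have hndr : r.natDegree ≤ m := by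
      have := (Polynomial.natDegree_lt_iff_degree_lt hrne).mpr hr_deg
      omega
    have hndt : t.natDegree < m := by
      have := Polynomial.natDegree_mul (Polynomial.X_ne_zero (R := ℂ)) ht0
      rw [← ht, Polynomial.natDegree_X] at this
      omega
    have hXit : ∀ i : ℕ, i ≤ t.natDegree → s13ip μ (X ^ i) t = 0 := by
      intro i hi
      have h1 : s13ip μ (X ^ (i + 1)) r = 0 := horthr (i + 1) (by omega) (by omega)
      rw [ht, show (X : Polynomial ℂ) ^ (i + 1) = X * X ^ i from pow_succ' X i,
        s13ip_X_mul hcirc] at h1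
      exact h1
    have htt : s13ip μ t t = 0 := by
      rw [s13ip_expand_left hcirc hnt hSm horth t t]
      refine Finset.sum_eq_zero fun i hi => ?_
      rw [hXit i (by simpa [Nat.lt_succ_iff] using hi), mul_zero]
    exact s13ip_self_zero hcirc hnt t htt
  have hrz : r = 0 := by rw [ht, ht0, mul_zero]
  rw [hr] at hrz
  linear_combination hrz

include hcirc hnt hSm horth in
lemma s13_szego_star (m : ℕ) :
    starPoly (S (m + 1)) = starPoly (S m) +
      C (conj ((S (m + 1)).eval 0)) * (X * S m) := by
  refine s13_eq_of_circle _ _ fun z hz => ?_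
  have h1 : conj z * z = 1 := s13_conj_mul_self hz
  rw [s13_starPoly_eval (S (m+1)) hz, (hSm (m+1)).2]
  rw [Polynomial.eval_add, Polynomial.eval_mul, Polynomial.eval_mul, Polynomial.eval_C,
    Polynomial.eval_X, s13_starPoly_eval (S m) hz, (hSm m).2]
  conv_lhs => rw [s13_szego hcirc hnt hSm horth m]
  rw [Polynomial.eval_add, Polynomial.eval_mul, Polynomial.eval_mul, Polynomial.eval_C,
    Polynomial.eval_X, s13_starPoly_eval (S m) hz, (hSm m).2]
  set A := (S m).eval z
  set e := (S (m+1)).eval 0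
  simp only [map_add, map_mul, map_pow, Complex.conj_conj]
  have h2 : z ^ (m+1) * conj z = z ^ m := by
    rw [pow_succ]; rw [mul_assoc, mul_comm z (conj z), h1, mul_one]
  have h3 : z ^ (m+1) * conj z ^ m = z := by
    rw [pow_succ', mul_assoc, ← mul_pow, mul_comm z (conj z), h1, one_pow, mul_one]
  calc z ^ (m+1) * (conj z * conj A + conj e * (conj z ^ m * A))
      = (z ^ (m+1) * conj z) * conj A + conj e * ((z ^ (m+1) * conj z ^ m) * A) := by ring
    _ = z ^ m * conj A + conj e * (z * A) := by rw [h2, h3]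

include hcirc hnt hSm horth in
lemma s13_X_mul_eq_sum (p : Polynomial ℂ) :
    X * p = ∑ i ∈ range (p.natDegree + 1), C (p.coeff i) * X ^ (i + 1) := by
  conv_lhs => rw [Polynomial.as_sum_range_C_mul_X_pow p]
  rw [Finset.mul_sum]
  exact Finset.sum_congr rfl fun i _ => by ring

include hcirc hnt hSm horth in
lemma s13_star_perp (m : ℕ) :
    s13ip μ (starPoly (S (m + 1))) (X * S m) = 0 := by
  rw [s13_X_mul_eq_sum hcirc hnt hSm horth (S m), s13ip_sum_right hcirc]
  refine Finset.sum_eq_zero fun k hk => ?_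
  simp only [Finset.mem_range] at hk
  rw [(hSm m).2] at hk
  rw [s13ip_Cmul_right]
  have h1 : s13ip μ (X ^ (k+1)) (starPoly (S (m+1))) =
      conj (s13ip μ (X ^ ((S (m+1)).natDegree - (k+1))) (S (m+1))) :=
    s13ip_Xpow_star hcirc _ (by rw [(hSm (m+1)).2]; omega)
  have h2 : s13ip μ (starPoly (S (m+1))) (X ^ (k+1)) = 0 := by
    rw [s13ip_swap, h1, Complex.conj_conj, (hSm (m+1)).2,
      s13ip_Xpow_S hcirc hnt hSm horth (by omega : m + 1 - (k+1) < m + 1)]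
  rw [h2, mul_zero]

include hcirc hnt hSm horth in
lemma s13_eval0_lt (m : ℕ) : ‖(S (m + 1)).eval 0‖ < 1 := by
  set e := (S (m+1)).eval 0 with he
  set N : ℂ := s13ip μ (S m) (S m) with hN
  have hNr : N = ((s13nsq μ (S m) : ℝ) : ℂ) := s13ip_self _
  have hNconj : conj N = N := by rw [hNr, Complex.conj_ofReal]
  -- (iv)
  have hXX : s13ip μ (X * S m) (X * S m) = N := s13ip_X_mul hcirc _ _
  have hstst : s13ip μ (starPoly (S m)) (starPoly (S m)) = N := s13ip_star_self hcirc _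
  have hivpre : s13ip μ (starPoly (S (m+1))) (X * S m) = 0 :=
    s13_star_perp hcirc hnt hSm horth m
  have hiv : s13ip μ (starPoly (S m)) (X * S m) = - (e * N) := by
    have hrec := s13_szego_star hcirc hnt hSm horth m
    rw [hrec, s13ip_add_left hcirc, s13ip_Cmul_left, Complex.conj_conj, hXX] at hivpre
    linear_combination hivpre
  have hv : s13ip μ (X * S m) (starPoly (S m)) = - (conj e * N) := by
    rw [s13ip_swap, hiv]
    simp [hNconj]
  have hvi : s13ip μ (S (m+1)) (S (m+1)) = (1 - e * conj e) * N := by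
    conv_lhs => rw [s13_szego hcirc hnt hSm horth m]
    rw [s13ip_add_left hcirc, s13ip_add_right hcirc, s13ip_add_right hcirc, s13ip_Cmul_left,
      s13ip_Cmul_right, s13ip_Cmul_right, s13ip_Cmul_left, hXX, hstst, hiv, hv]
    ring
  have hn1 : s13ip μ (S (m+1)) (S (m+1)) =
      ((s13nsq μ (S (m+1)) : ℝ) : ℂ) := s13ip_self _
  set a : ℝ := s13nsq μ (S (m+1)) with ha
  set b : ℝ := s13nsq μ (S m) with hb
  have hec : e * conj e = (Complex.normSq e : ℝ) := by
    rw [Complex.mul_conj]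
  have hreal : (a : ℂ) = ((1 - Complex.normSq e) * b : ℝ) := by
    rw [← hn1, hvi, hNr]
    push_cast
    rw [← hec]
  have hab : a = (1 - Complex.normSq e) * b := by exact_mod_cast hreal
  have hapos : 0 < a := s13nsq_pos hcirc hnt _ (hSm (m+1)).1.ne_zero
  have hbpos : 0 < b := s13nsq_pos hcirc hnt _ (hSm m).1.ne_zero
  have hlt : Complex.normSq e < 1 := by nlinarith
  have habs : ‖e‖ ^ 2 < 1 := by rw [Complex.sq_norm]; exact hlt
  nlinarith [norm_nonneg e]

end

/-- With `P_0 = 1` and `P_n(z) = z S_{n-1}(z) - ρ_{n-1} S_{n-1}^*(z)` for `n ≥ 1`, one has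
`P_n = (S_n - ρ_n S_n^*)/(1 + ρ_n α_{n-1})` for all `n ≥ 0`, and for `n ≥ 1` the monic three
term recurrence
`P_{n+1} = (z + ρ_n/ρ_{n-1}) P_n - (1 - conj(ρ_{n-1} α_{n-1}))(1 + ρ_{n-1} α_{n-2}) z P_{n-1}`. -/
theorem stmt13 (μ : MeasureTheory.Measure ℂ)
    (hprob : MeasureTheory.IsProbabilityMeasure μ)
    (hcirc : IsMeasureOnCircle μ) (hnt : IsNontrivialMeasure μ)
    (S : ℕ → Polynomial ℂ) (hS : IsMonicOPUC μ S)
    (A : ℕ → ℂ) (hA0 : A 0 = -1) (hA : ∀ n, 1 ≤ n → A n = -conj ((S n).eval 0))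
    (ρ : ℕ → ℂ) (hρ0a : ‖ρ 0‖ = 1) (hρ0b : ρ 0 ≠ 1)
    (hρ : ∀ n, 1 ≤ n → ρ n = (ρ (n - 1) - conj (A n)) / (1 - ρ (n - 1) * A n))
    (P : ℕ → Polynomial ℂ) (hP0 : P 0 = 1)
    (hP : ∀ n, 1 ≤ n → P n = X * S (n - 1) - C (ρ (n - 1)) * starPoly (S (n - 1))) :
    (∀ n, 1 + ρ n * A n ≠ 0 ∧
      P n = C (1 + ρ n * A n)⁻¹ * (S n - C (ρ n) * starPoly (S n))) ∧
    (∀ n, 1 ≤ n →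
      P (n + 1) = (X + C (ρ n / ρ (n - 1))) * P n -
        C ((1 - conj (ρ (n - 1) * A n)) * (1 + ρ (n - 1) * A (n - 1))) * X * P (n - 1)) := by
  obtain ⟨hSm, horthI⟩ := hS
  have horth : ∀ m n, m ≠ n → s13ip μ (S m) (S n) = 0 := horthI
  have hAlt : ∀ n, 1 ≤ n → ‖A n‖ < 1 := by
    intro n hn
    obtain ⟨m, rfl⟩ : ∃ m, n = m + 1 := ⟨n - 1, by omega⟩
    rw [hA _ hn]
    have h := s13_eval0_lt hcirc hnt hSm horth m
    calc ‖-conj ((S (m+1)).eval 0)‖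
        = ‖(S (m+1)).eval 0‖ := by
          rw [norm_neg, Complex.norm_conj]
      _ < 1 := h
  have hszego : ∀ m : ℕ, S (m + 1) = X * S m - C (conj (A (m + 1))) * starPoly (S m) := by
    intro m
    rw [hA (m + 1) (by omega)]
    simp only [map_neg, Complex.conj_conj]
    linear_combination s13_szego hcirc hnt hSm horth m
  have hszegostar : ∀ m : ℕ,
      starPoly (S (m + 1)) = starPoly (S m) - C (A (m + 1)) * (X * S m) := by
    intro m
    rw [hA (m + 1) (by omega)]
    simp only [map_neg]
    linear_combination s13_szego_star hcirc hnt hSm horth m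
  have hρabs : ∀ n, ‖ρ n‖ = 1 := by
    intro n
    induction n with
    | zero => exact hρ0a
    | succ m ih =>
        have hAm : ‖A (m + 1)‖ < 1 := hAlt (m + 1) (by omega)
        have hden0 : 1 - ρ m * A (m + 1) ≠ 0 := by
          intro h
          have h1 : ρ m * A (m + 1) = 1 := by linear_combination -h
          have h2 := congrArg norm h1
          rw [norm_mul, ih, one_mul, norm_one] at h2
          rw [h2] at hAm
          exact lt_irrefl 1 hAm
        have hmc : ρ m * conj (ρ m) = 1 := by
          rw [Complex.mul_conj, Complex.normSq_eq_norm_sq, ih]; norm_num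
        have hnum : ρ m - conj (A (m + 1)) = ρ m * conj (1 - ρ m * A (m + 1)) := by
          rw [map_sub, map_one, map_mul]
          linear_combination (conj (A (m + 1))) * hmc
        rw [hρ (m + 1) (by omega)]
        simp only [Nat.add_sub_cancel]
        rw [norm_div, hnum, norm_mul, ih, one_mul, Complex.norm_conj]
        exact div_self (norm_ne_zero_iff.mpr hden0)
  have hden : ∀ m : ℕ, 1 - ρ m * A (m + 1) ≠ 0 := by
    intro m h
    have h1 : ρ m * A (m + 1) = 1 := by linear_combination -h
    have h2 := congrArg norm h1
    rw [norm_mul, hρabs m, one_mul, norm_one] at h2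
    have := hAlt (m + 1) (by omega)
    rw [h2] at this
    exact lt_irrefl 1 this
  have hkey : ∀ m : ℕ, ρ (m + 1) * (1 - ρ m * A (m + 1)) = ρ m - conj (A (m + 1)) := by
    intro m
    rw [hρ (m + 1) (by omega)]
    simp only [Nat.add_sub_cancel]
    rw [div_mul_cancel₀ _ (hden m)]
  have hkey2 : ∀ m : ℕ,
      ρ (m + 1) + conj (A (m + 1)) = ρ m * (1 + ρ (m + 1) * A (m + 1)) := by
    intro m
    linear_combination hkey m
  have hne : ∀ n, 1 + ρ n * A n ≠ 0 := by
    intro n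
    cases n with
    | zero =>
        rw [hA0]
        intro h
        exact hρ0b (by linear_combination -h)
    | succ m =>
        intro h
        have h1 : ρ (m + 1) * A (m + 1) = -1 := by linear_combination h
        have h2 := congrArg norm h1
        rw [norm_mul, hρabs (m + 1), one_mul] at h2
        rw [show ‖(-1 : ℂ)‖ = 1 by simp] at h2
        have := hAlt (m + 1) (by omega)
        rw [h2] at this
        exact lt_irrefl 1 this
  have part1 : ∀ n, 1 + ρ n * A n ≠ 0 ∧
      P n = C (1 + ρ n * A n)⁻¹ * (S n - C (ρ n) * starPoly (S n)) := by
    intro n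
    refine ⟨hne n, ?_⟩
    cases n with
    | zero =>
        have hS0 : S 0 = 1 := Polynomial.Monic.natDegree_eq_zero (hSm 0).1 |>.mp (hSm 0).2
        have hstar1 : starPoly (1 : Polynomial ℂ) = 1 := by
          rw [starPoly, Polynomial.map_one, ← Polynomial.C_1, Polynomial.reverse_C]
        rw [hP0, hS0, hstar1, hA0]
        have hne0 : (1 : ℂ) - ρ 0 ≠ 0 := sub_ne_zero.mpr (Ne.symm hρ0b)
        rw [show (1 : ℂ) + ρ 0 * (-1) = 1 - ρ 0 by ring]
        rw [show (1 : Polynomial ℂ) - C (ρ 0) * 1 = C (1 - ρ 0) by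
          rw [mul_one, map_sub, map_one]]
        rw [← map_mul, inv_mul_cancel₀ hne0, map_one]
    | succ m =>
        have hd := hne (m + 1)
        apply mul_left_cancel₀ (Polynomial.C_ne_zero.mpr hd)
        rw [← mul_assoc, ← map_mul, mul_inv_cancel₀ hd, map_one, one_mul]
        rw [hP (m + 1) (by omega)]
        simp only [Nat.add_sub_cancel]
        rw [hszegostar m, hszego m]
        have hkey2C : (C (ρ (m + 1)) : Polynomial ℂ) + C (conj (A (m + 1))) =
            C (ρ m) * (1 + C (ρ (m + 1)) * C (A (m + 1))) := by
          calc (C (ρ (m + 1)) : Polynomial ℂ) + C (conj (A (m + 1)))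
              = C (ρ (m + 1) + conj (A (m + 1))) := (map_add C _ _).symm
            _ = C (ρ m * (1 + ρ (m + 1) * A (m + 1))) := by rw [hkey2 m]
            _ = C (ρ m) * (1 + C (ρ (m + 1)) * C (A (m + 1))) := by
                rw [map_mul, map_add, map_mul, map_one]
        rw [show (C (1 + ρ (m + 1) * A (m + 1)) : Polynomial ℂ) =
          1 + C (ρ (m + 1)) * C (A (m + 1)) by rw [map_add, map_mul, map_one]]
        linear_combination (starPoly (S m)) * hkey2C
  refine ⟨part1, ?_⟩
  intro n hn
  obtain ⟨m, rfl⟩ : ∃ m, n = m + 1 := ⟨n - 1, by omega⟩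
  simp only [Nat.add_sub_cancel]
  have hmc : ρ m * conj (ρ m) = 1 := by
    rw [Complex.mul_conj, Complex.normSq_eq_norm_sq, hρabs m]; norm_num
  have hdiv : ρ (m + 1) / ρ m = ρ (m + 1) * conj (ρ m) := by
    rw [div_eq_mul_inv]
    congr 1
    exact inv_eq_of_mul_eq_one_right hmc
  have hP2 := hP (m + 2) (by omega)
  simp only [show m + 2 - 1 = m + 1 by omega] at hP2
  rw [hP2, hszegostar m, hszego m]
  rw [hP (m + 1) (by omega)]
  simp only [Nat.add_sub_cancel]
  rw [(part1 m).2]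
  rw [show conj (ρ m * A (m + 1)) = conj (ρ m) * conj (A (m + 1)) from map_mul _ _ _, hdiv]
  set d := 1 + ρ m * A m with hdd
  have hdne : d ≠ 0 := hne m
  have hterm : C ((1 - conj (ρ m) * conj (A (m + 1))) * d) * X *
      (C d⁻¹ * (S m - C (ρ m) * starPoly (S m))) =
      C (1 - conj (ρ m) * conj (A (m + 1))) * X * (S m - C (ρ m) * starPoly (S m)) := by
    have hdd1 : (C d : Polynomial ℂ) * C d⁻¹ = 1 := by
      rw [← map_mul, mul_inv_cancel₀ hdne, map_one]
    calc C ((1 - conj (ρ m) * conj (A (m + 1))) * d) * X *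
        (C d⁻¹ * (S m - C (ρ m) * starPoly (S m)))
        = (C d * C d⁻¹) * (C (1 - conj (ρ m) * conj (A (m + 1))) * X *
            (S m - C (ρ m) * starPoly (S m))) := by rw [map_mul]; ring
      _ = _ := by rw [hdd1, one_mul]
  rw [hterm]
  have h1C : (C (ρ m) : Polynomial ℂ) * C (conj (ρ m)) = 1 := by
    rw [← map_mul, hmc, map_one]
  have h2C : (C (ρ (m + 1)) : Polynomial ℂ) * (1 - C (ρ m) * C (A (m + 1))) =
      C (ρ m) - C (conj (A (m + 1))) := by
    calc (C (ρ (m + 1)) : Polynomial ℂ) * (1 - C (ρ m) * C (A (m + 1)))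
        = C (ρ (m + 1) * (1 - ρ m * A (m + 1))) := by
          rw [map_mul, map_sub, map_one, map_mul]
      _ = C (ρ m - conj (A (m + 1))) := by rw [hkey m]
      _ = C (ρ m) - C (conj (A (m + 1))) := by rw [map_sub]
  rw [show (C (ρ (m + 1) * conj (ρ m)) : Polynomial ℂ) = C (ρ (m + 1)) * C (conj (ρ m))
    from map_mul _ _ _]
  rw [show (C (1 - conj (ρ m) * conj (A (m + 1))) : Polynomial ℂ) =
    1 - C (conj (ρ m)) * C (conj (A (m + 1))) by rw [map_sub, map_mul, map_one]]
  linear_combination (norm := ring_nf)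
    (-(C (conj (ρ m))) * (X * S m)) * h2C +
    (C (conj (A (m + 1))) * (X * starPoly (S m)) + C (ρ (m + 1)) * starPoly (S m) -
      (1 + C (ρ (m + 1)) * C (A (m + 1))) * (X * S m)) * h1C
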